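/- Let n ≥ 4 and let m₁₂, m₂₁ ∈ ℂ with m₁₂·m₂₁ ≠ 0. Put M = [[0,m₁₂,0],[m₂₁,0,0],[0,0,1]] and let N = (n_{pq}) be a 3×3 complex matrix. If the pair (M,N) satisfies the SMₙ mixed relations on M_{n+1}(ℂ), then n₁₃ = n₂₃ = n₃₁ = n₃₂ = 0, n₃₃ = 1, n₂₁ = m₂₁n₁₂/m₁₂, and n₂₂ = n₁₁. -/

import Mathlib

open Matrix

def loc3 (m i : ℕ) (P : Matrix (Fin 3) (Fin 3) ℂ) : Matrix (Fin m) (Fin m) ℂ :=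
  Matrix.of fun r s =>
    if (r : ℕ) = i - 1 ∧ (s : ℕ) = i - 1 then P 0 0
    else if (r : ℕ) = i - 1 ∧ (s : ℕ) = i then P 0 1
    else if (r : ℕ) = i - 1 ∧ (s : ℕ) = i + 1 then P 0 2
    else if (r : ℕ) = i ∧ (s : ℕ) = i - 1 then P 1 0
    else if (r : ℕ) = i ∧ (s : ℕ) = i then P 1 1
    else if (r : ℕ) = i ∧ (s : ℕ) = i + 1 then P 1 2
    else if (r : ℕ) = i + 1 ∧ (s : ℕ) = i - 1 then P 2 0
    else if (r : ℕ) = i + 1 ∧ (s : ℕ) = i then P 2 1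
    else if (r : ℕ) = i + 1 ∧ (s : ℕ) = i + 1 then P 2 2
    else if r = s then 1 else 0

/-- The pair `(M, N)` of 3×3 complex matrices satisfies the SMₙ mixed relations
on `M_{n+1}(ℂ)`. -/
def SMRel3 (n : ℕ) (M N : Matrix (Fin 3) (Fin 3) ℂ) : Prop :=
  (∀ i j : ℕ, 1 ≤ i → i ≤ n - 1 → 1 ≤ j → j ≤ n - 1 → (i + 2 ≤ j ∨ j + 2 ≤ i) →
      loc3 (n + 1) i N * loc3 (n + 1) j N = loc3 (n + 1) j N * loc3 (n + 1) i N) ∧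
  (∀ i j : ℕ, 1 ≤ i → i ≤ n - 1 → 1 ≤ j → j ≤ n - 1 → (i + 2 ≤ j ∨ j + 2 ≤ i) →
      loc3 (n + 1) i N * loc3 (n + 1) j M = loc3 (n + 1) j M * loc3 (n + 1) i N) ∧
  (∀ i : ℕ, 1 ≤ i → i ≤ n - 1 →
      loc3 (n + 1) i M * loc3 (n + 1) i N = loc3 (n + 1) i N * loc3 (n + 1) i M) ∧
  (∀ i : ℕ, 1 ≤ i → i ≤ n - 2 →
      loc3 (n + 1) i M * loc3 (n + 1) (i + 1) M * loc3 (n + 1) i N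
        = loc3 (n + 1) (i + 1) N * loc3 (n + 1) i M * loc3 (n + 1) (i + 1) M) ∧
  (∀ i : ℕ, 1 ≤ i → i ≤ n - 2 →
      loc3 (n + 1) (i + 1) M * loc3 (n + 1) i M * loc3 (n + 1) (i + 1) N
        = loc3 (n + 1) i N * loc3 (n + 1) (i + 1) M * loc3 (n + 1) i M)

lemma loc3_zero_row (m i : ℕ) (P : Matrix (Fin 3) (Fin 3) ℂ) (r s : Fin m)
    (hr : i + 2 ≤ (r : ℕ)) (hrs : (r : ℕ) ≠ (s : ℕ)) : loc3 m i P r s = 0 := by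
  simp only [loc3, of_apply, Fin.ext_iff]
  split_ifs <;> first | rfl | omega

lemma sum5 (m : ℕ) (hm : 5 ≤ m) (f : Fin m → ℂ)
    (h0 : ∀ k : Fin m, 5 ≤ (k : ℕ) → f k = 0) :
    ∑ k, f k = f ⟨0, by omega⟩ + f ⟨1, by omega⟩ + f ⟨2, by omega⟩
      + f ⟨3, by omega⟩ + f ⟨4, by omega⟩ := by
  rw [← Finset.sum_subset (Finset.subset_univ
      ((Finset.univ : Finset (Fin 5)).map (Fin.castLEEmb hm)))]
  · rw [Finset.sum_map, Fin.sum_univ_five]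
    rfl
  · intro x _ hx
    apply h0
    by_contra h'
    push_neg at h'
    exact hx (Finset.mem_map.mpr ⟨⟨x, h'⟩, Finset.mem_univ _, by ext; rfl⟩)

theorem stmt16 (n : ℕ) (hn : 4 ≤ n) (m12 m21 : ℂ) (hm : m12 * m21 ≠ 0)
    (N : Matrix (Fin 3) (Fin 3) ℂ)
    (h : SMRel3 n !![0, m12, 0; m21, 0, 0; 0, 0, 1] N) :
    N 0 2 = 0 ∧ N 1 2 = 0 ∧ N 2 0 = 0 ∧ N 2 1 = 0 ∧ N 2 2 = 1 ∧
    N 1 0 = m21 * N 0 1 / m12 ∧ N 1 1 = N 0 0 := by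
  have h12 : m12 ≠ 0 := left_ne_zero_of_mul hm
  have h21 : m21 ≠ 0 := right_ne_zero_of_mul hm
  set M : Matrix (Fin 3) (Fin 3) ℂ := !![0, m12, 0; m21, 0, 0; 0, 0, 1] with hMdef
  have key : ∀ (A B : Matrix (Fin (n+1)) (Fin (n+1)) ℂ) (r s : Fin (n+1)),
      (∀ k : Fin (n+1), 5 ≤ (k : ℕ) → A r k * B k s = 0) →
      (A * B) r s = A r ⟨0, by omega⟩ * B ⟨0, by omega⟩ s + A r ⟨1, by omega⟩ * B ⟨1, by omega⟩ s
        + A r ⟨2, by omega⟩ * B ⟨2, by omega⟩ s + A r ⟨3, by omega⟩ * B ⟨3, by omega⟩ s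
        + A r ⟨4, by omega⟩ * B ⟨4, by omega⟩ s := by
    intro A B r s hz
    rw [Matrix.mul_apply]
    exact sum5 (n+1) (by omega) _ hz
  have zz : ∀ (i j : ℕ) (P Q : Matrix (Fin 3) (Fin 3) ℂ) (r s : Fin (n+1)), j ≤ 3 → (s : ℕ) ≤ 4 →
      ∀ k : Fin (n+1), 5 ≤ (k : ℕ) →
        loc3 (n+1) i P r k * loc3 (n+1) j Q k s = 0 := by
    intro i j P Q r s hj hs k hk
    rw [loc3_zero_row (n+1) j Q k s (by omega) (by omega), mul_zero]
  have hc := h.2.1 1 3 (by omega) (by omega) (by omega) (by omega) (Or.inl (by omega))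
  have hd := h.2.2.1 1 (by omega) (by omega)
  have E02 := congrFun (congrFun hc ⟨0, by omega⟩) ⟨2, by omega⟩
  rw [key _ _ _ _ (zz 1 3 N M _ _ (by omega) (by norm_num)),
      key _ _ _ _ (zz 3 1 M N _ _ (by omega) (by norm_num))] at E02
  simp only [loc3, of_apply, hMdef] at E02
  norm_num [Fin.ext_iff] at E02
  have E12 := congrFun (congrFun hc ⟨1, by omega⟩) ⟨2, by omega⟩
  rw [key _ _ _ _ (zz 1 3 N M _ _ (by omega) (by norm_num)),
      key _ _ _ _ (zz 3 1 M N _ _ (by omega) (by norm_num))] at E12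
  simp only [loc3, of_apply, hMdef] at E12
  norm_num [Fin.ext_iff] at E12
  have E20 := congrFun (congrFun hc ⟨2, by omega⟩) ⟨0, by omega⟩
  rw [key _ _ _ _ (zz 1 3 N M _ _ (by omega) (by norm_num)),
      key _ _ _ _ (zz 3 1 M N _ _ (by omega) (by norm_num))] at E20
  simp only [loc3, of_apply, hMdef] at E20
  norm_num [Fin.ext_iff] at E20
  have E21 := congrFun (congrFun hc ⟨2, by omega⟩) ⟨1, by omega⟩
  rw [key _ _ _ _ (zz 1 3 N M _ _ (by omega) (by norm_num)),
      key _ _ _ _ (zz 3 1 M N _ _ (by omega) (by norm_num))] at E21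
  simp only [loc3, of_apply, hMdef] at E21
  norm_num [Fin.ext_iff] at E21
  have E23 := congrFun (congrFun hc ⟨2, by omega⟩) ⟨3, by omega⟩
  rw [key _ _ _ _ (zz 1 3 N M _ _ (by omega) (by norm_num)),
      key _ _ _ _ (zz 3 1 M N _ _ (by omega) (by norm_num))] at E23
  simp only [loc3, of_apply, hMdef] at E23
  norm_num [Fin.ext_iff] at E23
  have F00 := congrFun (congrFun hd ⟨0, by omega⟩) ⟨0, by omega⟩
  rw [key _ _ _ _ (zz 1 1 M N _ _ (by omega) (by norm_num)),
      key _ _ _ _ (zz 1 1 N M _ _ (by omega) (by norm_num))] at F00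
  simp only [loc3, of_apply, hMdef] at F00
  norm_num [Fin.ext_iff] at F00
  have F01 := congrFun (congrFun hd ⟨0, by omega⟩) ⟨1, by omega⟩
  rw [key _ _ _ _ (zz 1 1 M N _ _ (by omega) (by norm_num)),
      key _ _ _ _ (zz 1 1 N M _ _ (by omega) (by norm_num))] at F01
  simp only [loc3, of_apply, hMdef] at F01
  norm_num [Fin.ext_iff] at F01
  simp [Matrix.vecHead, Matrix.vecTail, ← E02] at F01
  refine ⟨E02.symm, E12.symm, E20, E21, ?_, ?_, ?_⟩
  · exact mul_right_cancel₀ h12 (E23.trans (one_mul m12).symm)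
  · field_simp
    simp only [← E02, E20, mul_zero, zero_mul, add_zero] at F00
    linear_combination F00
  · exact mul_left_cancel₀ h12 (by linear_combination F01)
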